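/- arXiv:2210.09350 — 7 statements merged into one kernel-verified Lean document; each statement's English description precedes it below -/
import Mathlib

section
/- If r is a weak square root on a pseudo MV-algebra M, then for all x, y ∈ M: r is monotone (x ≤ y implies r(x) ≤ r(y)), x ∨ r(0) ≤ r(x), and r(x ∧ y) = r(x) ∧ r(y). -/
/-- A pseudo MV-algebra `(M; ⊕, ⁻, ∼, 0, 1)` satisfying axioms (A1)–(A8),
with `x ⊙ y := (y⁻ ⊕ x⁻)∼`. -/
class PseudoMV (M : Type*) where
  oplus : M → M → M
  lneg : M → M
  rneg : M → M
  zero : M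
  one : M
  oplus_assoc : ∀ x y z : M, oplus x (oplus y z) = oplus (oplus x y) z
  oplus_zero : ∀ x : M, oplus x zero = x
  zero_oplus : ∀ x : M, oplus zero x = x
  oplus_one : ∀ x : M, oplus x one = one
  one_oplus : ∀ x : M, oplus one x = one
  lneg_one : lneg one = zero
  rneg_one : rneg one = zero
  a5 : ∀ x y : M, rneg (oplus (lneg x) (lneg y)) = lneg (oplus (rneg x) (rneg y))
  a6₁ : ∀ x y : M,
    oplus x (rneg (oplus (lneg y) (lneg (rneg x)))) =
      oplus y (rneg (oplus (lneg x) (lneg (rneg y))))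
  a6₂ : ∀ x y : M,
    oplus x (rneg (oplus (lneg y) (lneg (rneg x)))) =
      oplus (rneg (oplus (lneg (lneg y)) (lneg x))) y
  a6₃ : ∀ x y : M,
    oplus x (rneg (oplus (lneg y) (lneg (rneg x)))) =
      oplus (rneg (oplus (lneg (lneg x)) (lneg y))) x
  a7 : ∀ x y : M,
    rneg (oplus (lneg (oplus (lneg x) y)) (lneg x)) =
      rneg (oplus (lneg y) (lneg (oplus x (rneg y))))
  a8 : ∀ x : M, rneg (lneg x) = x

namespace PseudoMV

variable {M : Type*} [PseudoMV M]

/-- `x ⊙ y := (y⁻ ⊕ x⁻)∼`. -/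
def mul (x y : M) : M := rneg (oplus (lneg y) (lneg x))

/-- `x ∨ y = x ⊕ (x∼ ⊙ y)` (axiom (A6)). -/
def sup (x y : M) : M := oplus x (mul (rneg x) y)

/-- `x ∧ y = x ⊙ (x⁻ ⊕ y)` (axiom (A7)). -/
def inf (x y : M) : M := mul x (oplus (lneg x) y)

/-- The lattice order of a pseudo MV-algebra. -/
def le (x y : M) : Prop := sup x y = y

/-- `x → y := x⁻ ⊕ y`. -/
def arrow (x y : M) : M := oplus (lneg x) y

/-- `x ⇝ y := y ⊕ x∼`. -/
def squig (x y : M) : M := oplus y (rneg x)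

/-- A weak square root: (Sq1) and (Sq2). -/
def IsWeakSqrt (r : M → M) : Prop :=
  (∀ x : M, mul (r x) (r x) = x) ∧
  (∀ x y : M, le (mul y y) x → le y (r x))

/-- A square root: (Sq1), (Sq2) and (Sq3). -/
def IsSqrt (r : M → M) : Prop :=
  IsWeakSqrt r ∧
  (∀ x : M, r (lneg x) = arrow (r x) (r zero) ∧ r (rneg x) = squig (r x) (r zero))

end PseudoMV

open PseudoMV

section PMVFacts

variable {M : Type*} [PseudoMV M]

lemma pmv_fg (x : M) : lneg (rneg x) = x := by
  have h := a5 x (one : M)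
  rw [lneg_one, rneg_one, oplus_zero, oplus_zero, a8] at h
  exact h.symm

lemma pmv_lneg_zero : (lneg (zero : M)) = one := by
  rw [show (zero : M) = rneg one from (rneg_one).symm, pmv_fg]

lemma pmv_lneg_oplus (a b : M) : lneg (oplus a b) = mul (lneg b) (lneg a) := by
  unfold mul
  rw [a5, a8, a8]

lemma pmv_rneg_oplus (a b : M) : rneg (oplus a b) = mul (rneg b) (rneg a) := by
  unfold mul
  rw [pmv_fg, pmv_fg]

lemma pmv_lneg_mul (a b : M) : lneg (mul a b) = oplus (lneg b) (lneg a) := by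
  unfold mul
  rw [pmv_fg]

lemma pmv_rneg_mul (a b : M) : rneg (mul a b) = oplus (rneg b) (rneg a) := by
  unfold mul
  rw [a5, a8]

lemma pmv_mul_one (x : M) : mul x one = x := by
  unfold mul
  rw [lneg_one, zero_oplus, a8]

lemma pmv_one_mul (x : M) : mul one x = x := by
  unfold mul
  rw [lneg_one, oplus_zero, a8]

lemma pmv_oplus_rneg_self (x : M) : oplus x (rneg x) = one := by
  have h := a6₂ x (one : M)
  rw [lneg_one, zero_oplus, a8, oplus_one] at h
  exact h

lemma pmv_oplus_lneg_self (x : M) : oplus (lneg x) x = one := by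
  have h := a6₃ x (one : M)
  rw [lneg_one, zero_oplus, a8, oplus_zero, a8] at h
  rw [← h, pmv_oplus_rneg_self]

lemma pmv_mul_lneg_self (x : M) : mul x (lneg x) = zero := by
  unfold mul
  rw [a5, a8, pmv_oplus_rneg_self, lneg_one]

lemma pmv_mul_rneg_self (x : M) : mul (rneg x) x = zero := by
  unfold mul
  rw [pmv_fg, pmv_oplus_lneg_self, rneg_one]

lemma pmv_sup_comm (x y : M) : sup x y = sup y x := a6₁ x y

lemma pmv_sup_eq₂ (x y : M) : sup x y = oplus (mul x (lneg y)) y := a6₂ x y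

lemma pmv_sup_eq₄ (x y : M) : sup x y = oplus (mul y (lneg x)) x := a6₃ x y

lemma pmv_inf_eq₂ (x y : M) : inf x y = mul (oplus x (rneg y)) y := a7 x y

lemma pmv_mul_assoc (a b c : M) : mul (mul a b) c = mul a (mul b c) := by
  simp only [mul]
  rw [pmv_fg, pmv_fg, oplus_assoc]

lemma pmv_le_of_a {x y : M} (h : oplus (lneg x) y = one) : le x y := by
  unfold le
  rw [pmv_sup_comm]
  show oplus y (mul (rneg y) x) = y
  unfold mul
  rw [pmv_fg, h, rneg_one, oplus_zero]

lemma pmv_b_of_le {x y : M} (h : le x y) : oplus y (rneg x) = one := by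
  have h4 : oplus (mul y (lneg x)) x = y := by rw [← pmv_sup_eq₄]; exact h
  rw [← h4, ← oplus_assoc, pmv_oplus_rneg_self, oplus_one]

lemma pmv_a_of_b {x y : M} (h : oplus y (rneg x) = one) : oplus (lneg x) y = one := by
  have hx : mul y (oplus (lneg y) x) = x := by
    have h7 : inf y x = mul (oplus y (rneg x)) x := pmv_inf_eq₂ y x
    unfold inf at h7
    rw [h7, h, pmv_one_mul]
  rw [← hx, pmv_lneg_mul, ← oplus_assoc, pmv_oplus_lneg_self, oplus_one]

lemma pmv_b_of_a {x y : M} (h : oplus (lneg x) y = one) : oplus y (rneg x) = one := by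
  have hx : mul (oplus x (rneg y)) y = x := by
    have h7 : inf x y = mul (oplus x (rneg y)) y := pmv_inf_eq₂ x y
    unfold inf at h7
    rw [← h7]
    rw [h, pmv_mul_one]
  rw [← hx, pmv_rneg_mul, oplus_assoc, pmv_oplus_rneg_self, one_oplus]

lemma pmv_a_of_le {x y : M} (h : le x y) : oplus (lneg x) y = one :=
  pmv_a_of_b (pmv_b_of_le h)

lemma pmv_le_of_b {x y : M} (h : oplus y (rneg x) = one) : le x y :=
  pmv_le_of_a (pmv_a_of_b h)

lemma pmv_le_refl (x : M) : le x x := pmv_le_of_a (pmv_oplus_lneg_self x)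

lemma pmv_le_antisymm {x y : M} (h1 : le x y) (h2 : le y x) : x = y := by
  unfold le at h1 h2
  rw [← h2, pmv_sup_comm, h1]

lemma pmv_mul_le_left (x y : M) : le (mul x y) x := by
  apply pmv_le_of_a
  rw [pmv_lneg_mul, ← oplus_assoc, pmv_oplus_lneg_self, oplus_one]

lemma pmv_mul_le_right (x y : M) : le (mul x y) y := by
  apply pmv_le_of_b
  rw [pmv_rneg_mul, oplus_assoc, pmv_oplus_rneg_self, one_oplus]

lemma pmv_rep_right {x y : M} (h : le x y) : mul (oplus x (rneg y)) y = x := by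
  rw [← pmv_inf_eq₂]
  unfold inf
  rw [pmv_a_of_le h, pmv_mul_one]

lemma pmv_rep_left {x y : M} (h : le x y) : mul y (oplus (lneg y) x) = x := by
  have h7 : inf y x = mul (oplus y (rneg x)) x := pmv_inf_eq₂ y x
  unfold inf at h7
  rw [h7, pmv_b_of_le h, pmv_one_mul]

lemma pmv_le_trans {x y z : M} (h1 : le x y) (h2 : le y z) : le x z := by
  have r1 := pmv_rep_right h1
  have r2 := pmv_rep_right h2
  have hx : x = mul (mul (oplus x (rneg y)) (oplus y (rneg z))) z := by
    rw [pmv_mul_assoc, r2, r1]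
  rw [hx]
  exact pmv_mul_le_right _ _

lemma pmv_zero_le (x : M) : le zero x := by
  apply pmv_le_of_a
  rw [pmv_lneg_zero, one_oplus]

lemma pmv_le_iff_lneg {x y : M} : le x y ↔ le (lneg y) (lneg x) := by
  constructor
  · intro h
    apply pmv_le_of_b
    rw [a8]
    exact pmv_a_of_le h
  · intro h
    have := pmv_b_of_le h
    rw [a8] at this
    exact pmv_le_of_a this

lemma pmv_le_iff_rneg {x y : M} : le x y ↔ le (rneg y) (rneg x) := by
  constructor
  · intro h
    apply pmv_le_of_a
    rw [pmv_fg]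
    exact pmv_b_of_le h
  · intro h
    have := pmv_a_of_le h
    rw [pmv_fg] at this
    exact pmv_le_of_b this

lemma pmv_oplus_le_oplus_left {x y : M} (h : le x y) (z : M) :
    le (oplus x z) (oplus y z) := by
  apply pmv_le_of_b
  rw [pmv_rneg_oplus, ← oplus_assoc]
  have hs : oplus z (mul (rneg z) (rneg x)) = sup z (rneg x) := rfl
  rw [hs, pmv_sup_comm]
  show oplus y (oplus (rneg x) (mul (rneg (rneg x)) z)) = one
  rw [oplus_assoc, pmv_b_of_le h, one_oplus]

lemma pmv_oplus_le_oplus_right {x y : M} (h : le x y) (z : M) :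
    le (oplus z x) (oplus z y) := by
  apply pmv_le_of_a
  rw [pmv_lneg_oplus, oplus_assoc, ← pmv_sup_eq₂, pmv_sup_comm, pmv_sup_eq₂ z (lneg x),
      ← oplus_assoc, pmv_a_of_le h, oplus_one]

lemma pmv_mul_le_mul_left {x y : M} (h : le x y) (z : M) : le (mul x z) (mul y z) := by
  apply pmv_le_iff_lneg.mpr
  rw [pmv_lneg_mul, pmv_lneg_mul]
  exact pmv_oplus_le_oplus_right (pmv_le_iff_lneg.mp h) _

lemma pmv_mul_le_mul_right {x y : M} (h : le x y) (z : M) : le (mul z x) (mul z y) := by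
  apply pmv_le_iff_rneg.mpr
  rw [pmv_rneg_mul, pmv_rneg_mul]
  exact pmv_oplus_le_oplus_left (pmv_le_iff_rneg.mp h) _

lemma pmv_sup_le {x y z : M} (h1 : le x z) (h2 : le y z) : le (sup x y) z := by
  have s1 : le (sup x y) (sup z y) := by
    rw [pmv_sup_eq₂ x y, pmv_sup_eq₂ z y]
    exact pmv_oplus_le_oplus_left (pmv_mul_le_mul_left h1 (lneg y)) y
  have s2 : le (sup y z) z := by
    rw [pmv_sup_eq₂ y z]
    have h3 := pmv_oplus_le_oplus_left (pmv_mul_le_mul_left h2 (lneg z)) z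
    rw [pmv_mul_lneg_self, zero_oplus] at h3
    exact h3
  have s2' : le (sup z y) z := by rw [pmv_sup_comm z y]; exact s2
  exact pmv_le_trans s1 s2'

lemma pmv_inf_le_left (x y : M) : le (inf x y) x :=
  pmv_mul_le_left x (oplus (lneg x) y)

lemma pmv_inf_le_right (x y : M) : le (inf x y) y := by
  rw [pmv_inf_eq₂]
  exact pmv_mul_le_right _ _

lemma pmv_le_inf {x y z : M} (h1 : le z x) (h2 : le z y) : le z (inf x y) := by
  have r := pmv_rep_left h1
  have m := pmv_mul_le_mul_right (pmv_oplus_le_oplus_right h2 (lneg x)) x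
  rw [r] at m
  exact m

end PMVFacts


theorem stmt1 {M : Type*} [PseudoMV M] (r : M → M) (hr : IsWeakSqrt r) :
    (∀ x y : M, le x y → le (r x) (r y)) ∧
    (∀ x : M, le (sup x (r zero)) (r x)) ∧
    (∀ x y : M, r (inf x y) = inf (r x) (r y)) := by
  obtain ⟨sq1, sq2⟩ := hr
  have mono : ∀ x y : M, le x y → le (r x) (r y) := by
    intro x y h
    apply sq2
    rw [sq1]
    exact h
  refine ⟨mono, ?_, ?_⟩
  · intro x
    have h1 : le x (r x) := sq2 x x (pmv_mul_le_left x x)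
    have h2 : le (r zero) (r x) := mono _ _ (pmv_zero_le x)
    exact pmv_sup_le h1 h2
  · intro x y
    have hle : le (r (inf x y)) (inf (r x) (r y)) :=
      pmv_le_inf (mono _ _ (pmv_inf_le_left x y)) (mono _ _ (pmv_inf_le_right x y))
    have hge : le (inf (r x) (r y)) (r (inf x y)) := by
      apply sq2
      apply pmv_le_inf
      · have t := pmv_le_trans
          (pmv_mul_le_mul_left (pmv_inf_le_left (r x) (r y)) (inf (r x) (r y)))
          (pmv_mul_le_mul_right (pmv_inf_le_left (r x) (r y)) (r x))
        rw [sq1] at t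
        exact t
      · have t := pmv_le_trans
          (pmv_mul_le_mul_left (pmv_inf_le_right (r x) (r y)) (inf (r x) (r y)))
          (pmv_mul_le_mul_right (pmv_inf_le_right (r x) (r y)) (r y))
        rw [sq1] at t
        exact t
    exact pmv_le_antisymm hle hge
end

section
/- If r is a square root on a pseudo MV-algebra M, then r(x ∨ y) = r(x) ∨ r(y) for all x, y ∈ M. -/
open PseudoMV

namespace PseudoMV

variable {M : Type*} [PseudoMV M]

theorem rneg_zero : (rneg (zero : M)) = one := by rw [← lneg_one, a8]

theorem lneg_rneg (x : M) : lneg (rneg x) = x := by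
  have h := a5 x one
  rw [lneg_one, rneg_one, oplus_zero, oplus_zero, a8] at h
  exact h.symm

theorem lneg_zero : (lneg (zero : M)) = one := by rw [← rneg_one, lneg_rneg]

theorem mul_def' (x y : M) : mul x y = lneg (oplus (rneg y) (rneg x)) := a5 y x

theorem sup_def (x y : M) : sup x y = oplus x (mul (rneg x) y) := rfl
theorem inf_def (x y : M) : inf x y = mul x (oplus (lneg x) y) := rfl

theorem sup_eq₁ (x y : M) : sup x y = sup y x := a6₁ x y
theorem sup_eq₂ (x y : M) : sup x y = oplus (mul x (lneg y)) y := a6₂ x y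
theorem sup_eq₃ (x y : M) : sup x y = oplus (mul y (lneg x)) x := a6₃ x y
theorem inf_eq' (x y : M) : inf x y = mul (oplus x (rneg y)) y := a7 x y

theorem lneg_mul (x y : M) : lneg (mul x y) = oplus (lneg y) (lneg x) := by
  show lneg (rneg _) = _
  rw [lneg_rneg]

theorem rneg_mul (x y : M) : rneg (mul x y) = oplus (rneg y) (rneg x) := by
  rw [mul_def', a8]

theorem lneg_oplus (x y : M) : lneg (oplus x y) = mul (lneg y) (lneg x) := by
  rw [mul_def', a8, a8]

theorem rneg_oplus (x y : M) : rneg (oplus x y) = mul (rneg y) (rneg x) := by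
  show _ = rneg (oplus (lneg (rneg x)) (lneg (rneg y)))
  rw [lneg_rneg, lneg_rneg]

theorem mul_lneg_self (x : M) : mul x (lneg x) = zero := by
  have h := a7 x zero
  rw [oplus_zero] at h
  rw [lneg_zero, one_oplus, rneg_one] at h
  exact h

theorem lneg_lneg_oplus (x : M) : oplus (lneg (lneg x)) (lneg x) = one := by
  have h := congrArg lneg (mul_lneg_self x)
  rwa [lneg_mul, lneg_zero] at h

theorem lneg_oplus_self (x : M) : oplus (lneg x) x = one := by
  have h := lneg_lneg_oplus (rneg x)
  rwa [lneg_rneg] at h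

theorem oplus_rneg_self (x : M) : oplus x (rneg x) = one := by
  have h := lneg_oplus_self (rneg x)
  rwa [lneg_rneg] at h

theorem mul_one' (x : M) : mul x one = x := by
  show rneg (oplus (lneg one) (lneg x)) = x
  rw [lneg_one, zero_oplus, a8]

theorem one_mul' (x : M) : mul one x = x := by
  show rneg (oplus (lneg x) (lneg one)) = x
  rw [lneg_one, oplus_zero, a8]

theorem le_iff₁ {x y : M} : le x y ↔ oplus (lneg x) y = one := by
  constructor
  · intro h
    have h' : sup x y = y := h
    rw [← h', sup_def, oplus_assoc, lneg_oplus_self, one_oplus]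
  · intro h
    show sup x y = y
    rw [sup_eq₁, sup_def]
    have hm : mul (rneg y) x = zero := by
      show rneg (oplus (lneg x) (lneg (rneg y))) = zero
      rw [lneg_rneg, h, rneg_one]
    rw [hm, oplus_zero]

theorem le_iff₂ {x y : M} : le x y ↔ oplus y (rneg x) = one := by
  constructor
  · intro h
    have h' : sup x y = y := h
    have h3 : oplus (mul y (lneg x)) x = y := by rw [← sup_eq₃, h']
    rw [← h3, ← oplus_assoc, oplus_rneg_self, oplus_one]
  · intro h
    show sup x y = y
    rw [sup_eq₂]
    have hm : mul x (lneg y) = zero := by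
      rw [mul_def', a8, h, lneg_one]
    rw [hm, zero_oplus]

theorem le_refl' (x : M) : le x x := le_iff₁.mpr (lneg_oplus_self x)

theorem le_trans' {x y z : M} (h1 : le x y) (h2 : le y z) : le x z := by
  apply le_iff₁.mpr
  have h1' := le_iff₁.mp h1
  have h2' : sup y z = z := h2
  rw [← h2', sup_def, oplus_assoc, h1', one_oplus]

theorem le_antisymm' {x y : M} (h1 : le x y) (h2 : le y x) : x = y := by
  have hc := sup_eq₁ x y
  have h1' : sup x y = y := h1
  have h2' : sup y x = x := h2
  rw [h1', h2'] at hc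
  exact hc.symm

theorem le_sup_left' (x y : M) : le x (sup x y) := by
  apply le_iff₁.mpr
  rw [sup_def, oplus_assoc, lneg_oplus_self, one_oplus]

theorem le_sup_right' (x y : M) : le y (sup x y) := by
  rw [sup_eq₁]
  exact le_sup_left' y x

theorem le_one' (x : M) : le x one := le_iff₁.mpr (oplus_one _)

theorem zero_le' (x : M) : le zero x := by
  apply le_iff₁.mpr
  rw [lneg_zero, one_oplus]

theorem sup_zero_left (x : M) : sup zero x = x := zero_le' x

theorem lneg_antitone {x y : M} (h : le x y) : le (lneg y) (lneg x) := by
  apply le_iff₂.mpr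
  rw [a8]
  exact le_iff₁.mp h

theorem rneg_antitone {x y : M} (h : le x y) : le (rneg y) (rneg x) := by
  apply le_iff₁.mpr
  rw [lneg_rneg]
  exact le_iff₂.mp h

theorem le_of_rneg_le {x y : M} (h : le (rneg y) (rneg x)) : le x y := by
  have h' := lneg_antitone h
  rwa [lneg_rneg, lneg_rneg] at h'

theorem le_of_lneg_le {x y : M} (h : le (lneg y) (lneg x)) : le x y := by
  have h' := rneg_antitone h
  rwa [a8, a8] at h'

theorem res₁ {x y z : M} : le (mul x y) z ↔ le y (oplus (lneg x) z) := by
  rw [le_iff₁, le_iff₁, lneg_mul, ← oplus_assoc]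

theorem res₂ {x y z : M} : le (mul x y) z ↔ le x (oplus z (rneg y)) := by
  rw [le_iff₂, le_iff₂, rneg_mul, oplus_assoc]

theorem oplus_le_oplus_left {a b : M} (c : M) (h : le a b) :
    le (oplus c a) (oplus c b) := by
  apply le_of_lneg_le
  rw [lneg_oplus, lneg_oplus]
  apply res₂.mpr
  rw [a8, ← sup_eq₂]
  exact le_trans' (lneg_antitone h) (le_sup_left' (lneg a) c)

theorem oplus_le_oplus_right {a b : M} (c : M) (h : le a b) :
    le (oplus a c) (oplus b c) := by
  apply le_of_rneg_le
  rw [rneg_oplus, rneg_oplus]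
  apply res₁.mpr
  rw [lneg_rneg, ← sup_def]
  exact le_trans' (rneg_antitone h) (le_sup_right' c (rneg a))

theorem mul_le_mul_left' {a b : M} (c : M) (h : le a b) :
    le (mul c a) (mul c b) := by
  show le (rneg (oplus (lneg a) (lneg c))) (rneg (oplus (lneg b) (lneg c)))
  exact rneg_antitone (oplus_le_oplus_right _ (lneg_antitone h))

theorem mul_le_mul_right' {a b : M} (c : M) (h : le a b) :
    le (mul a c) (mul b c) := by
  show le (rneg (oplus (lneg c) (lneg a))) (rneg (oplus (lneg c) (lneg b)))
  exact rneg_antitone (oplus_le_oplus_left _ (lneg_antitone h))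

theorem sup_le' {x y z : M} (hx : le x z) (hy : le y z) : le (sup x y) z := by
  have h1 : le (sup x y) (sup x z) := by
    rw [sup_def, sup_def]
    exact oplus_le_oplus_left x (mul_le_mul_left' _ hy)
  have hxz : sup x z = z := hx
  rwa [hxz] at h1

theorem inf_le_right' (x y : M) : le (inf x y) y := by
  show le (mul x (oplus (lneg x) y)) y
  exact res₁.mpr (le_refl' _)

theorem inf_le_left' (x y : M) : le (inf x y) x := by
  show le (mul x (oplus (lneg x) y)) x
  apply res₂.mpr
  apply le_iff₁.mpr
  rw [oplus_assoc, lneg_oplus_self, one_oplus]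

theorem rneg_sup (a b : M) : rneg (sup a b) = inf (rneg a) (rneg b) := by
  rw [sup_eq₃, rneg_oplus, rneg_mul, a8, inf_def, lneg_rneg]

theorem inf_eq_rneg_sup (x y : M) : inf x y = rneg (sup (lneg x) (lneg y)) := by
  rw [rneg_sup, a8, a8]

theorem le_inf' {x y z : M} (hx : le z x) (hy : le z y) : le z (inf x y) := by
  rw [inf_eq_rneg_sup]
  have h := rneg_antitone (sup_le' (lneg_antitone hx) (lneg_antitone hy))
  rwa [a8] at h

theorem lneg_inf (a b : M) : lneg (inf a b) = sup (lneg b) (lneg a) := by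
  rw [inf_def, lneg_mul, lneg_oplus, sup_eq₂]

theorem inf_comm' (x y : M) : inf x y = inf y x :=
  le_antisymm' (le_inf' (inf_le_right' _ _) (inf_le_left' _ _))
    (le_inf' (inf_le_right' _ _) (inf_le_left' _ _))

theorem mul_sup (c y z : M) : mul c (sup y z) = sup (mul c y) (mul c z) := by
  apply le_antisymm'
  · apply res₁.mpr
    apply sup_le'
    · exact res₁.mp (le_sup_left' _ _)
    · exact res₁.mp (le_sup_right' _ _)
  · apply sup_le'
    · exact mul_le_mul_left' _ (le_sup_left' _ _)
    · exact mul_le_mul_left' _ (le_sup_right' _ _)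

theorem inf_sup_le (x y z : M) :
    le (inf x (sup y z)) (sup (inf x y) (inf x z)) := by
  have h1 : le (inf x (sup y z)) (sup y z) := inf_le_right' _ _
  have hdiv : mul (oplus (inf x (sup y z)) (rneg (sup y z))) (sup y z)
      = inf x (sup y z) := by
    rw [← inf_eq']
    exact le_antisymm' (inf_le_left' _ _) (le_inf' (le_refl' _) h1)
  have hsum : inf x (sup y z) =
      sup (mul (oplus (inf x (sup y z)) (rneg (sup y z))) y)
          (mul (oplus (inf x (sup y z)) (rneg (sup y z))) z) := by
    rw [← mul_sup, hdiv]
  have hty : le (mul (oplus (inf x (sup y z)) (rneg (sup y z))) y) (inf x y) := by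
    apply le_inf'
    · have h2 : le (mul (oplus (inf x (sup y z)) (rneg (sup y z))) y)
          (mul (oplus (inf x (sup y z)) (rneg (sup y z))) (sup y z)) :=
        mul_le_mul_left' _ (le_sup_left' _ _)
      rw [hdiv] at h2
      exact le_trans' h2 (inf_le_left' _ _)
    · have h2 : le (mul (oplus (inf x (sup y z)) (rneg (sup y z))) y) (mul one y) :=
        mul_le_mul_right' _ (le_one' _)
      rwa [one_mul'] at h2
  have htz : le (mul (oplus (inf x (sup y z)) (rneg (sup y z))) z) (inf x z) := by
    apply le_inf'
    · have h2 : le (mul (oplus (inf x (sup y z)) (rneg (sup y z))) z)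
          (mul (oplus (inf x (sup y z)) (rneg (sup y z))) (sup y z)) :=
        mul_le_mul_left' _ (le_sup_right' _ _)
      rw [hdiv] at h2
      exact le_trans' h2 (inf_le_left' _ _)
    · have h2 : le (mul (oplus (inf x (sup y z)) (rneg (sup y z))) z) (mul one z) :=
        mul_le_mul_right' _ (le_one' _)
      rwa [one_mul'] at h2
  rw [hsum]
  exact sup_le' (le_trans' hty (le_sup_left' _ _)) (le_trans' htz (le_sup_right' _ _))

theorem inf_sup_sup_le (p a b : M) :
    le (inf (sup p a) (sup p b)) (sup p (inf a b)) := by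
  apply le_trans' (inf_sup_le (sup p a) p b)
  apply sup_le'
  · exact le_trans' (inf_le_right' _ _) (le_sup_left' _ _)
  · rw [inf_comm' (sup p a) b]
    apply le_trans' (inf_sup_le b p a)
    apply sup_le'
    · exact le_trans' (inf_le_right' _ _) (le_sup_left' _ _)
    · rw [inf_comm' b a]
      exact le_sup_right' _ _

theorem inf_mul_le (e u v : M) :
    le (inf (mul e u) (mul e v)) (mul e (inf u v)) := by
  have hDe : le (inf (mul e u) (mul e v)) e := by
    have h2 := mul_le_mul_left' e (le_one' u)
    rw [mul_one'] at h2
    exact le_trans' (inf_le_left' _ _) h2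
  have hdiv : mul e (oplus (lneg e) (inf (mul e u) (mul e v)))
      = inf (mul e u) (mul e v) := by
    rw [← inf_def]
    exact le_antisymm' (inf_le_right' _ _) (le_inf' hDe (le_refl' _))
  have htu : le (oplus (lneg e) (inf (mul e u) (mul e v))) (sup (lneg e) u) := by
    have h2 : le (oplus (lneg e) (inf (mul e u) (mul e v))) (oplus (lneg e) (mul e u)) :=
      oplus_le_oplus_left _ (inf_le_left' _ _)
    have h3 : sup (lneg e) u = oplus (lneg e) (mul e u) := by
      rw [sup_def, a8]
    rwa [← h3] at h2
  have htv : le (oplus (lneg e) (inf (mul e u) (mul e v))) (sup (lneg e) v) := by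
    have h2 : le (oplus (lneg e) (inf (mul e u) (mul e v))) (oplus (lneg e) (mul e v)) :=
      oplus_le_oplus_left _ (inf_le_right' _ _)
    have h3 : sup (lneg e) v = oplus (lneg e) (mul e v) := by
      rw [sup_def, a8]
    rwa [← h3] at h2
  have ht : le (oplus (lneg e) (inf (mul e u) (mul e v))) (sup (lneg e) (inf u v)) :=
    le_trans' (le_inf' htu htv) (inf_sup_sup_le _ _ _)
  have final := mul_le_mul_left' e ht
  rw [hdiv, mul_sup, mul_lneg_self, sup_zero_left] at final
  exact final

theorem sup_oplus (a b c : M) :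
    oplus (sup a b) c = sup (oplus a c) (oplus b c) := by
  apply le_antisymm'
  · apply le_of_rneg_le
    rw [rneg_sup, rneg_oplus, rneg_oplus, rneg_oplus, rneg_sup]
    exact inf_mul_le _ _ _
  · apply sup_le'
    · exact oplus_le_oplus_right _ (le_sup_left' _ _)
    · exact oplus_le_oplus_right _ (le_sup_right' _ _)

theorem r_mono {r : M → M} (hr : IsSqrt r) {a b : M} (h : le a b) :
    le (r a) (r b) := by
  apply hr.1.2
  rw [hr.1.1]
  exact h

theorem r_inf {r : M → M} (hr : IsSqrt r) (x y : M) :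
    r (inf x y) = inf (r x) (r y) := by
  apply le_antisymm'
  · exact le_inf' (r_mono hr (inf_le_left' _ _)) (r_mono hr (inf_le_right' _ _))
  · apply hr.1.2
    apply le_inf'
    · have h1 : le (mul (inf (r x) (r y)) (inf (r x) (r y))) (mul (r x) (r x)) :=
        le_trans' (mul_le_mul_right' _ (inf_le_left' _ _))
          (mul_le_mul_left' _ (inf_le_left' _ _))
      rwa [hr.1.1] at h1
    · have h1 : le (mul (inf (r x) (r y)) (inf (r x) (r y))) (mul (r y) (r y)) :=
        le_trans' (mul_le_mul_right' _ (inf_le_right' _ _))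
          (mul_le_mul_left' _ (inf_le_right' _ _))
      rwa [hr.1.1] at h1

end PseudoMV

theorem stmt3 {M : Type*} [PseudoMV M] (r : M → M) (hr : IsSqrt r) :
    ∀ x y : M, r (sup x y) = sup (r x) (r y) := by
  intro x y
  have hs := hr.2
  have key : ∀ a b : M, r (sup (lneg b) (lneg a)) = sup (r (lneg b)) (r (lneg a)) := by
    intro a b
    have h1 : r (sup (lneg b) (lneg a)) = r (lneg (inf a b)) := by rw [lneg_inf]
    rw [h1, (hs (inf a b)).1]
    show oplus (lneg (r (inf a b))) (r zero) = sup (r (lneg b)) (r (lneg a))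
    rw [r_inf hr, lneg_inf, sup_oplus,
      ← (show r (lneg b) = oplus (lneg (r b)) (r zero) from (hs b).1),
      ← (show r (lneg a) = oplus (lneg (r a)) (r zero) from (hs a).1)]
  have h2 := key (rneg y) (rneg x)
  rwa [lneg_rneg, lneg_rneg] at h2
end

section
/- If r is a square root on a pseudo MV-algebra M, then x ⊕ r(0) = r(0) ⊕ x and x ⊕ r(x) = r(x) ⊕ x for all x ∈ M. -/
open PseudoMV

theorem stmt9 {M : Type*} [PseudoMV M] (r : M → M) (hr : IsSqrt r) :
    ∀ x : M, oplus x (r zero) = oplus (r zero) x ∧ oplus x (r x) = oplus (r x) x := by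
  obtain ⟨⟨hsq1, _hsq2⟩, hsq3⟩ := hr
  -- `lneg (rneg x) = x`
  have L1 : ∀ x : M, lneg (rneg x) = x := by
    intro x
    have h := a5 x (one : M)
    rw [lneg_one, rneg_one, oplus_zero, oplus_zero, a8] at h
    exact h.symm
  -- De Morgan-type consequence of (A5) and (A8)
  have DM : ∀ p q : M, lneg (oplus p q)
      = rneg (oplus (lneg (lneg p)) (lneg (lneg q))) := by
    intro p q
    have h := a5 (lneg p) (lneg q)
    rw [a8, a8] at h
    exact h.symm
  -- main construction, for an arbitrary element `a`
  have key : ∀ a : M,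
      oplus a (r zero) = oplus (r zero) a ∧
      r a = oplus (lneg (r (rneg a))) (r zero) ∧
      oplus (lneg (r (rneg a))) (lneg (r (rneg a))) = a := by
    intro a
    -- `r a = t ⊕ E` with `E := rneg (r (lneg a))`
    have hE : r a = oplus (r zero) (rneg (r (lneg a))) := by
      have h := (hsq3 (lneg a)).2
      rw [a8] at h
      simpa [squig] using h
    -- `r a = F ⊕ t` with `F := lneg (r (rneg a))`
    have hF : r a = oplus (lneg (r (rneg a))) (r zero) := by
      have h := (hsq3 (rneg a)).1
      rw [L1] at h
      simpa [arrow] using h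
    -- `F ⊕ F = a`
    have hFF : oplus (lneg (r (rneg a))) (lneg (r (rneg a))) = a := by
      have h := hsq1 (rneg a)
      simp only [mul] at h
      have h2 := congrArg lneg h
      rw [L1, L1] at h2
      exact h2
    -- `E ⊕ E = a`
    have hEE : oplus (rneg (r (lneg a))) (rneg (r (lneg a))) = a := by
      have h := hsq1 (lneg a)
      simp only [mul] at h
      have hDM := DM (rneg (r (lneg a))) (rneg (r (lneg a)))
      rw [L1, h] at hDM
      have h2 := congrArg rneg hDM
      rw [a8, a8] at h2
      exact h2
    have hvv : oplus (lneg (r (rneg a))) (r zero)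
        = oplus (r zero) (rneg (r (lneg a))) := by rw [← hF, hE]
    refine ⟨?_, hF, hFF⟩
    calc oplus a (r zero)
        = oplus (oplus (lneg (r (rneg a))) (lneg (r (rneg a)))) (r zero) := by rw [hFF]
      _ = oplus (lneg (r (rneg a))) (oplus (lneg (r (rneg a))) (r zero)) :=
          (oplus_assoc _ _ _).symm
      _ = oplus (lneg (r (rneg a))) (oplus (r zero) (rneg (r (lneg a)))) := by rw [hvv]
      _ = oplus (oplus (lneg (r (rneg a))) (r zero)) (rneg (r (lneg a))) :=
          oplus_assoc _ _ _
      _ = oplus (oplus (r zero) (rneg (r (lneg a)))) (rneg (r (lneg a))) := by rw [hvv]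
      _ = oplus (r zero) (oplus (rneg (r (lneg a))) (rneg (r (lneg a)))) :=
          (oplus_assoc _ _ _).symm
      _ = oplus (r zero) a := by rw [hEE]
  intro x
  obtain ⟨p1, hF, hFF⟩ := key x
  refine ⟨p1, ?_⟩
  calc oplus x (r x)
      = oplus x (oplus (lneg (r (rneg x))) (r zero)) := by rw [← hF]
    _ = oplus (oplus x (lneg (r (rneg x)))) (r zero) := oplus_assoc _ _ _
    _ = oplus (oplus (oplus (lneg (r (rneg x))) (lneg (r (rneg x)))) (lneg (r (rneg x))))
          (r zero) := by rw [hFF]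
    _ = oplus (oplus (lneg (r (rneg x))) (oplus (lneg (r (rneg x))) (lneg (r (rneg x)))))
          (r zero) := by rw [oplus_assoc]
    _ = oplus (oplus (lneg (r (rneg x))) x) (r zero) := by rw [hFF]
    _ = oplus (lneg (r (rneg x))) (oplus x (r zero)) := (oplus_assoc _ _ _).symm
    _ = oplus (lneg (r (rneg x))) (oplus (r zero) x) := by rw [p1]
    _ = oplus (oplus (lneg (r (rneg x))) (r zero)) x := oplus_assoc _ _ _
    _ = oplus (r x) x := by rw [← hF]
end

section
/- Let (G, u) be a linearly ordered (or, more generally, representable) two-divisible unital ℓ-group with u/2 in the center of G, and let M = Γ(G, u) = [0, u] with x ⊕ y = (x + y) ∧ u, x⁻ = u − x, x∼ = −x + u. Then the map s(x) = (x + u)/2 is a strict square root on M. -/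
/-- If `(G, u)` is a linearly ordered two-divisible unital ℓ-group with `u/2`
central, then on `M = Γ(G,u) = [0,u]` (with `x ⊕ y = (x+y) ⊓ u`,
`x ⊙ y = (x - u + y) ⊔ 0`, `x⁻ = u - x`, `x∼ = -x + u`) the map
`s x = (x + u)/2` is a strict square root: it maps `M` into `M`, satisfies
(Sq1), (Sq2), (Sq3), and strictness `s 0 = (s 0)⁻`. -/
theorem stmt16 {G : Type*} [AddGroup G] [LinearOrder G]
    [CovariantClass G G (· + ·) (· ≤ ·)]
    [CovariantClass G G (Function.swap (· + ·)) (· ≤ ·)]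
    (u : G) (hu : 0 ≤ u) (hstrong : ∀ g : G, ∃ n : ℕ, g ≤ n • u)
    (hdiv : ∀ g : G, ∃ h : G, h + h = g)
    (v : G) (hv : v + v = u) (hvcentral : ∀ g : G, g + v = v + g)
    (s : G → G) (hs : ∀ x : G, s x + s x = x + u) :
    (∀ x : G, 0 ≤ x → x ≤ u → 0 ≤ s x ∧ s x ≤ u) ∧
    (∀ x : G, 0 ≤ x → x ≤ u → max (s x - u + s x) 0 = x) ∧
    (∀ x y : G, 0 ≤ x → x ≤ u → 0 ≤ y → y ≤ u →
      max (y - u + y) 0 ≤ x → y ≤ s x) ∧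
    (∀ x : G, 0 ≤ x → x ≤ u →
      s (u - x) = min (u - s x + s 0) u ∧
      s (-x + u) = min (s 0 + (-(s x) + u)) u) ∧
    s 0 = u - s 0 := by
  -- squaring is injective and "monotone-reflecting"
  have sq_inj : ∀ a b : G, a + a = b + b → a = b := by
    intro a b h
    rcases le_total a b with hab | hab
    · have h1 : a + a ≤ a + b := add_le_add_right hab a
      have h2 : a + b ≤ a + a := h ▸ add_le_add_left hab b
      exact add_left_cancel (le_antisymm h1 h2)
    · have h1 : b + b ≤ b + a := add_le_add_right hab b
      have h2 : b + a ≤ b + b := h ▸ add_le_add_left hab a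
      exact (add_left_cancel (le_antisymm h1 h2)).symm
  have sq_le : ∀ a b : G, a + a ≤ b + b → a ≤ b := by
    intro a b h
    by_contra h'
    push_neg at h'
    have h2 : b + b ≤ a + a := add_le_add h'.le h'.le
    exact h'.ne' (sq_inj a b (le_antisymm h h2))
  -- u is central
  have ucent : ∀ g : G, g + u = u + g := by
    intro g
    rw [← hv, ← add_assoc, hvcentral g, add_assoc, hvcentral g, ← add_assoc]
  have hs0 : s 0 = v := by
    apply sq_inj
    rw [hs 0, zero_add, hv]
  -- double of s x - u + s x is handled directly
  have key2 : ∀ x : G, s x - u + s x = x := by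
    intro x
    have : s x + -u + s x = x := by
      calc s x + -u + s x = -u + s x + s x := by
            have h := ucent (s x)
            have h' : -u + (s x + u) + -u = -u + (u + s x) + -u := by rw [h]
            have h'' : -u + s x = s x + -u := by
              have e1 : -u + (s x + u) + -u = -u + s x := by
                simp [add_assoc]
              have e2 : -u + (u + s x) + -u = s x + -u := by
                simp [← add_assoc]
              rw [e1, e2] at h'
              exact h'
            rw [h'']
        _ = -u + (s x + s x) := by rw [add_assoc]
        _ = -u + (x + u) := by rw [hs x]
        _ = -u + (u + x) := by rw [ucent x]
        _ = x := by simp [← add_assoc]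
    simpa [sub_eq_add_neg] using this
  have vle : ∀ x : G, 0 ≤ x → v ≤ s x := by
    intro x hx
    apply sq_le
    rw [hv, hs x]
    exact le_add_of_nonneg_left hx
  refine ⟨?_, ?_, ?_, ?_, ?_⟩
  · -- (Sq0): s maps into [0, u]
    intro x hx0 hxu
    constructor
    · apply sq_le
      rw [hs x, add_zero]
      exact add_nonneg hx0 hu
    · apply sq_le
      rw [hs x]
      exact add_le_add_left hxu u
  · -- (Sq2)
    intro x hx0 hxu
    rw [key2 x, max_eq_left hx0]
  · -- (Sq3)
    intro x y hx0 hxu hy0 hyu hmax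
    have h1 : y - u + y ≤ x := le_trans (le_max_left _ _) hmax
    apply sq_le
    rw [hs x]
    have h2 : u + (y - u + y) ≤ u + x := add_le_add_right h1 u
    have h3 : u + (y - u + y) = y + y := by
      have : y - u = y + -u := sub_eq_add_neg y u
      rw [this]
      calc u + (y + -u + y) = u + (-u + y + y) := by
            congr 1
            have h := ucent y
            have h' : -u + (y + u) + -u = -u + (u + y) + -u := by rw [h]
            have e1 : -u + (y + u) + -u = -u + y := by simp [add_assoc]
            have e2 : -u + (u + y) + -u = y + -u := by simp [← add_assoc]
            rw [e1, e2] at h'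
            rw [← h', add_assoc]
        _ = y + y := by simp [← add_assoc]
    rw [h3] at h2
    calc y + y ≤ u + x := h2
      _ = x + u := (ucent x).symm
  · -- (Sq4)
    intro x hx0 hxu
    have hd : (u - s x) + (u - s x) = u - x := by
      calc (u - s x) + (u - s x) = u + (-(s x) + u) + -(s x) := by
            simp [sub_eq_add_neg, add_assoc]
        _ = u + (u + -(s x)) + -(s x) := by rw [ucent (-(s x))]
        _ = (u + u) + (-(s x) + -(s x)) := by simp [add_assoc]
        _ = (u + u) + -(s x + s x) := by rw [neg_add_rev]
        _ = (u + u) + -(x + u) := by rw [hs x]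
        _ = (u + u) + (-u + -x) := by rw [neg_add_rev]
        _ = u + -x := by simp [add_assoc]
        _ = u - x := (sub_eq_add_neg u x).symm
    have hval : s (u - x) = u - s x + v := by
      apply sq_inj
      rw [hs (u - x)]
      calc (u - x) + u = ((u - s x) + (u - s x)) + (v + v) := by rw [hd, hv]
        _ = (u - s x) + ((u - s x) + v) + v := by simp [add_assoc]
        _ = (u - s x) + (v + (u - s x)) + v := by rw [hvcentral (u - s x)]
        _ = (u - s x + v) + (u - s x + v) := by simp [add_assoc]
    have hle : u - s x + v ≤ u := by
      have := add_le_add_right (vle x hx0) (u - s x)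
      rwa [sub_add_cancel] at this
    constructor
    · rw [hs0, hval, min_eq_left hle]
    · have hxeq : -x + u = u - x := by
        rw [sub_eq_add_neg, ← ucent (-x)]
      have hv2 : s 0 + (-(s x) + u) = u - s x + v := by
        rw [hs0, sub_eq_add_neg, ← ucent (-(s x)), hvcentral (-(s x) + u)]
      rw [hxeq, hval, hv2, min_eq_left hle]
  · rw [hs0]
    exact eq_sub_of_add_eq hv
end

section
/- Let M = Γ(G, u) where (G, u) is a linearly ordered (or representable) two-divisible unital ℓ-group. Then the map r(x) = ((x − u)/2) + u is a weak square root on M, and r(0) = u/2 = r(0)⁻ = r(0)∼ (so r is strict). -/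
/-- If `(G, u)` is a linearly ordered two-divisible unital ℓ-group, then on
`M = Γ(G,u) = [0,u]` the map `r x = ((x - u)/2) + u` (characterized by
`(r x - u) + (r x - u) = x - u`) is a weak square root: it maps `M` into `M`
and satisfies (Sq1) and (Sq2); moreover `r 0 = u/2 = (r 0)⁻ = (r 0)∼`,
so `r` is strict. -/
theorem stmt17 {G : Type*} [AddGroup G] [LinearOrder G]
    [CovariantClass G G (· + ·) (· ≤ ·)]
    [CovariantClass G G (Function.swap (· + ·)) (· ≤ ·)]
    (u : G) (hu : 0 ≤ u) (hstrong : ∀ g : G, ∃ n : ℕ, g ≤ n • u)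
    (hdiv : ∀ g : G, ∃ h : G, h + h = g)
    (r : G → G) (hr : ∀ x : G, (r x - u) + (r x - u) = x - u) :
    (∀ x : G, 0 ≤ x → x ≤ u → 0 ≤ r x ∧ r x ≤ u) ∧
    (∀ x : G, 0 ≤ x → x ≤ u → max (r x - u + r x) 0 = x) ∧
    (∀ x y : G, 0 ≤ x → x ≤ u → 0 ≤ y → y ≤ u →
      max (y - u + y) 0 ≤ x → y ≤ r x) ∧
    r 0 + r 0 = u ∧ r 0 = u - r 0 ∧ r 0 = -(r 0) + u := by
  -- key: r x ≤ u whenever x ≤ u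
  have hle : ∀ x : G, x ≤ u → r x ≤ u := by
    intro x hxu
    by_contra h
    push_neg at h
    have h1 : 0 < r x - u := sub_pos.2 h
    have h2 : (0 : G) < (r x - u) + (r x - u) := by
      calc (0 : G) = 0 + 0 := by rw [add_zero]
        _ < (r x - u) + (r x - u) := add_lt_add h1 h1
    rw [hr x] at h2
    exact absurd (sub_nonpos.2 hxu) (not_le.2 h2)
  -- key: x ≤ r x whenever 0 ≤ x ≤ u  (so 0 ≤ r x)
  have hge : ∀ x : G, x ≤ u → x ≤ r x := by
    intro x hxu
    have h1 : r x - u ≤ 0 := sub_nonpos.2 (hle x hxu)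
    have h2 : (r x - u) + (r x - u) ≤ (r x - u) + 0 :=
      add_le_add le_rfl h1
    rw [add_zero, hr x] at h2
    exact sub_le_sub_iff_right u |>.1 h2
  -- key identity: r x - u + r x = x
  have hsq : ∀ x : G, r x - u + r x = x := by
    intro x
    have := hr x
    have h : (r x - u) + (r x - u) + u = x - u + u := by rw [this]
    simpa [sub_add_cancel, add_assoc] using h
  refine ⟨fun x hx hxu => ⟨le_trans hx (hge x hxu), hle x hxu⟩,
    fun x hx hxu => by rw [hsq x]; exact max_eq_left hx,
    fun x y hx hxu hy hyu hmax => ?_, ?_, ?_, ?_⟩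
  · -- Sq2
    have h1 : y - u + y ≤ x := le_trans (le_max_left _ _) hmax
    have h2 : (y - u) + (y - u) ≤ x - u := by
      have := sub_le_sub_right h1 u
      simpa [add_sub_assoc] using this
    rw [← hr x] at h2
    by_contra h
    push_neg at h
    have h3 : r x - u < y - u := sub_lt_sub_right h u
    have h4 : (r x - u) + (r x - u) < (y - u) + (y - u) := add_lt_add h3 h3
    exact absurd h2 (not_le.2 h4)
  · -- r 0 + r 0 = u
    have h := hsq 0
    have h2 : r 0 - u = -(r 0) := eq_neg_of_add_eq_zero_left h
    calc r 0 + r 0 = r 0 + ((r 0 - u) + u) := by rw [sub_add_cancel]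
      _ = (r 0 + (r 0 - u)) + u := (add_assoc _ _ _).symm
      _ = (r 0 + -(r 0)) + u := by rw [h2]
      _ = u := by rw [add_neg_cancel, zero_add]
  · -- r 0 = u - r 0
    have h := hsq 0
    have h2 : r 0 - u = -(r 0) := eq_neg_of_add_eq_zero_left h
    have hsum : r 0 + r 0 = u := by
      calc r 0 + r 0 = r 0 + ((r 0 - u) + u) := by rw [sub_add_cancel]
        _ = (r 0 + (r 0 - u)) + u := (add_assoc _ _ _).symm
        _ = (r 0 + -(r 0)) + u := by rw [h2]
        _ = u := by rw [add_neg_cancel, zero_add]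
    exact eq_sub_of_add_eq hsum
  · -- r 0 = -(r 0) + u
    have h := hsq 0
    have h2 : r 0 - u = -(r 0) := eq_neg_of_add_eq_zero_left h
    exact sub_eq_iff_eq_add.mp h2
end

section
/- Let M = Γ(G, u) be a linearly ordered symmetric pseudo MV-algebra with a square root r and r(0) > 0. Then for every x ∈ M the element (x + u)/2 exists in M and r(x) = (x + u)/2, where + is the group addition of G. In particular 2·r(0) = u. -/
/-- Let `M = Γ(G,u)` be a linearly ordered symmetric pseudo MV-algebra
(on the interval `[0,u]` of the linearly ordered unital ℓ-group `(G,u)`,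
with `x ⊙ y = (x - u + y) ⊔ 0`, `x⁻ = u - x`, `x∼ = -x + u`, `x → y = (x⁻ + y) ⊓ u`,
`x ⇝ y = (y + x∼) ⊓ u`) with a square root `r` such that `r 0 > 0`. Then for
every `x ∈ M` the element `(x+u)/2` exists in `M` and `r x = (x+u)/2`,
i.e. `r x + r x = x + u`; in particular `2 • r 0 = u`. -/
theorem stmt18 {G : Type*} [AddGroup G] [LinearOrder G]
    [CovariantClass G G (· + ·) (· ≤ ·)]
    [CovariantClass G G (Function.swap (· + ·)) (· ≤ ·)]
    (u : G) (hu : 0 ≤ u) (hstrong : ∀ g : G, ∃ n : ℕ, g ≤ n • u)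
    (hsym : ∀ x : G, 0 ≤ x → x ≤ u → u - x = -x + u)
    (r : G → G)
    (hmap : ∀ x : G, 0 ≤ x → x ≤ u → 0 ≤ r x ∧ r x ≤ u)
    (sq1 : ∀ x : G, 0 ≤ x → x ≤ u → max (r x - u + r x) 0 = x)
    (sq2 : ∀ x y : G, 0 ≤ x → x ≤ u → 0 ≤ y → y ≤ u →
      max (y - u + y) 0 ≤ x → y ≤ r x)
    (sq3 : ∀ x : G, 0 ≤ x → x ≤ u →
      r (u - x) = min (u - r x + r 0) u ∧
      r (-x + u) = min (r 0 + (-(r x) + u)) u)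
    (hpos : 0 < r 0) :
    (∀ x : G, 0 ≤ x → x ≤ u → r x + r x = x + u) ∧ r 0 + r 0 = u := by
  -- u commutes with every element of [0,u]
  have hcomm : ∀ x : G, 0 ≤ x → x ≤ u → AddCommute u x := by
    intro x hx hxu
    have h2 : u + -x = -x + u := by rw [← sub_eq_add_neg]; exact hsym x hx hxu
    have h3 : AddCommute u (-x) := h2
    simpa using h3.neg_right
  -- key: for x > 0, r x + r x = x + u
  have key : ∀ x : G, 0 < x → x ≤ u → r x + r x = x + u := by
    intro x hx hxu
    obtain ⟨hr0, hru⟩ := hmap x hx.le hxu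
    have h1 := sq1 x hx.le hxu
    have h2 : r x - u + r x = x := by
      rcases max_choice (r x - u + r x) 0 with h | h
      · rw [h] at h1; exact h1
      · rw [h] at h1; exact absurd h1.symm hx.ne'
    have hc : AddCommute u (r x) := hcomm _ hr0 hru
    have h3 : r x + r x - u = x := by
      rw [sub_eq_add_neg] at h2
      rw [add_assoc, hc.neg_left.eq, ← add_assoc] at h2
      rw [sub_eq_add_neg]; exact h2
    exact sub_eq_iff_eq_add.mp h3
  obtain ⟨ha0, hau'⟩ := hmap 0 le_rfl hu
  set a := r 0 with ha_def
  have hcom_a : AddCommute u a := hcomm a ha0 hau'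
  have haa_le : a + a ≤ u := by
    have h1 := sq1 0 le_rfl hu
    have h2 : a - u + a ≤ 0 := max_eq_right_iff.mp h1
    have h3 : a + a - u ≤ 0 := by
      rw [sub_eq_add_neg] at h2
      rw [add_assoc, hcom_a.neg_left.eq, ← add_assoc] at h2
      rw [sub_eq_add_neg]; exact h2
    exact sub_nonpos.mp h3
  have hau : a + a = u := by
    by_contra hne
    have h : a + a < u := lt_of_le_of_ne haa_le hne
    set x0 := u - (a + a) with hx0
    have hx0pos : 0 < x0 := sub_pos.mpr h
    have haa0 : 0 ≤ a + a := add_nonneg ha0 ha0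
    have hx0le : x0 ≤ u := sub_le_self u haa0
    obtain ⟨hb0, hbu⟩ := hmap x0 hx0pos.le hx0le
    set b := r x0 with hb_def
    have hbb : b + b = x0 + u := key x0 hx0pos hx0le
    set c := r (a + a) with hc_def
    obtain ⟨hc0, hcu⟩ := hmap (a + a) haa0 haa_le
    have hcc : c + c = (a + a) + u := key (a + a) (add_pos hpos hpos) haa_le
    have hcom_aa : AddCommute u (a + a) := hcom_a.add_right hcom_a
    have hcom_b : AddCommute u b := hcomm b hb0 hbu
    have hcom_c : AddCommute u c := hcomm c hc0 hcu
    -- a ≤ b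
    have hab : a ≤ b := by
      apply sq2 x0 a hx0pos.le hx0le ha0 hau'
      rw [sq1 0 le_rfl hu]
      exact hx0pos.le
    -- sq3 at x0 gives c = u - b + a
    have hux0 : u - x0 = a + a := by
      rw [hx0, sub_eq_add_neg u (u - (a+a)), sub_eq_add_neg u (a+a), neg_add_rev, neg_neg,
        ← add_assoc, hcom_aa.eq, add_assoc, add_neg_cancel, add_zero]
    have h3 := (sq3 x0 hx0pos.le hx0le).1
    rw [hux0] at h3
    rw [← hc_def, ← hb_def] at h3
    have hmin : u - b + a ≤ u := by
      calc u - b + a ≤ u - b + b := add_le_add_right hab _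
      _ = u := sub_add_cancel u b
    have hc_eq : c = u - b + a := by rw [h3, min_eq_left hmin]
    -- hence b = a - c + u
    have hb_eq : b = a - c + u := by
      rw [hc_eq]
      simp [sub_eq_add_neg, neg_add_rev, add_assoc]
    -- derive (a - c) + (a - c) = -a + -a
    have heq : (a - c) + (a - c) = -a + -a := by
      have h1 : (a - c + u) + (a - c + u) = (u - (a + a)) + u := by
        rw [← hb_eq]; exact hbb
      have hcom_ac : AddCommute u (a - c) := by
        rw [sub_eq_add_neg]; exact hcom_a.add_right hcom_c.neg_right
      have h2 : (a - c) + (a - c) + (u + u) = (-a + -a) + (u + u) := by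
        calc (a - c) + (a - c) + (u + u)
            = (a - c) + ((a - c) + u) + u := by rw [add_assoc, add_assoc, add_assoc]
          _ = (a - c) + (u + (a - c)) + u := by rw [hcom_ac.eq]
          _ = (a - c + u) + (a - c + u) := by rw [add_assoc, add_assoc, add_assoc]
          _ = (u - (a + a)) + u := h1
          _ = (u + -(a + a)) + u := by rw [sub_eq_add_neg]
          _ = (-(a + a) + u) + u := by rw [hcom_aa.neg_right.eq]
          _ = (-a + -a) + (u + u) := by rw [neg_add_rev, add_assoc]
      exact add_right_cancel h2
    -- but c > a + a, so (a - c) + (a - c) < -a + -a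
    have hclt : a + a < c := by
      by_contra hle
      push_neg at hle
      have : c + c ≤ (a + a) + (a + a) := add_le_add hle hle
      rw [hcc] at this
      exact absurd (le_of_add_le_add_left this) (not_le.mpr h)
    have hac : a - c < -a := by
      have h1 : a + -c < a + -(a + a) := add_lt_add_right (neg_lt_neg_iff.mpr hclt) a
      have h2 : a + -(a + a) = -a := by
        rw [neg_add_rev, ← add_assoc, add_neg_cancel, zero_add]
      rw [sub_eq_add_neg, ← h2]; exact h1
    have : (a - c) + (a - c) < -a + -a := add_lt_add hac hac
    rw [heq] at this
    exact lt_irrefl _ this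
  refine ⟨fun x hx hxu => ?_, hau⟩
  rcases hx.eq_or_lt with h | h
  · rw [← h, zero_add]; exact hau
  · exact key x h hxu
end

section
/- In the semidirect-product pseudo MV-algebra M = Γ(H ⋉ ℝ, (2,0)), where H = ((0,∞), ·, ≤) with unit 2 acting on ℝ by φ_h(g) = h·g and the group ordered lexicographically, the map r(h₀, g₀) = (√(2h₀), (2/(√(2h₀)+2))·g₀) is a strict weak square root on M that is not a square root (condition (Sq3) fails). -/
namespace Stmt19

/-- The lexicographic order on the semidirect product `H ⋉ ℝ`,
`H = ((0,∞), ·)`, realized on pairs of reals. -/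
def le2 (p q : ℝ × ℝ) : Prop := p.1 < q.1 ∨ (p.1 = q.1 ∧ p.2 ≤ q.2)

noncomputable instance (p q : ℝ × ℝ) : Decidable (le2 p q) := by unfold le2; infer_instance

noncomputable def sup2 (p q : ℝ × ℝ) : ℝ × ℝ := if le2 p q then q else p

noncomputable def inf2 (p q : ℝ × ℝ) : ℝ × ℝ := if le2 p q then p else q

/-- `(h₁,g₁) ⊙ (h₂,g₂) = ((h₁h₂)/2, (h₂/2)g₁ + g₂) ∨ (1,0)`. -/
noncomputable def mulM (p q : ℝ × ℝ) : ℝ × ℝ :=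
  sup2 (p.1 * q.1 / 2, q.1 / 2 * p.2 + q.2) (1, 0)

/-- `(h₁,g₁) ⊕ (h₂,g₂) = ((h₁,g₁)·(h₂,g₂)) ∧ (2,0)`, where the group product is
`(h₁h₂, h₂g₁ + g₂)`. -/
noncomputable def oplusM (p q : ℝ × ℝ) : ℝ × ℝ :=
  inf2 (p.1 * q.1, q.1 * p.2 + q.2) (2, 0)

/-- `(h,g)⁻ = (2/h, −(1/h)g)`. -/
noncomputable def lnegM (p : ℝ × ℝ) : ℝ × ℝ := (2 / p.1, -(1 / p.1) * p.2)

/-- `(h,g)∼ = (2/h, −(2/h)g)`. -/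
noncomputable def rnegM (p : ℝ × ℝ) : ℝ × ℝ := (2 / p.1, -(2 / p.1) * p.2)

/-- `r(h₀,g₀) = (√(2h₀), (2/(√(2h₀)+2))·g₀)`. -/
noncomputable def rM (p : ℝ × ℝ) : ℝ × ℝ :=
  (Real.sqrt (2 * p.1), 2 / (Real.sqrt (2 * p.1) + 2) * p.2)

/-- Membership in `M = Γ(H ⋉ ℝ, (2,0)) = [(1,0),(2,0)]`. -/
def Mem (p : ℝ × ℝ) : Prop := le2 (1, 0) p ∧ le2 p (2, 0)

private lemma sfacts {h : ℝ} (h1 : 1 ≤ h) :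
    Real.sqrt (2*h) * Real.sqrt (2*h) = 2*h ∧ 1 < Real.sqrt (2*h) := by
  have h0 : (0:ℝ) ≤ 2*h := by linarith
  have e := Real.mul_self_sqrt h0
  refine ⟨e, ?_⟩
  nlinarith [Real.sqrt_nonneg (2*h)]

/-- In the pseudo MV-algebra `M = Γ(H ⋉ ℝ, (2,0))`, the map `rM` maps `M` into
`M`, satisfies (Sq1), (Sq2), is strict (`r(0) = r(0)⁻`, where `(1,0)` is the
zero of `M`), but (Sq3) fails, so `rM` is a strict weak square root that is
not a square root. -/
theorem stmt19 :
    (∀ p : ℝ × ℝ, Mem p → Mem (rM p)) ∧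
    (∀ p : ℝ × ℝ, Mem p → mulM (rM p) (rM p) = p) ∧
    (∀ p q : ℝ × ℝ, Mem p → Mem q → le2 (mulM q q) p → le2 q (rM p)) ∧
    rM (1, 0) = lnegM (rM (1, 0)) ∧
    ¬ (∀ p : ℝ × ℝ, Mem p →
        rM (lnegM p) = oplusM (lnegM (rM p)) (rM (1, 0)) ∧
        rM (rnegM p) = oplusM (rM (1, 0)) (rnegM (rM p))) := by
  refine ⟨?_, ?_, ?_, ?_, ?_⟩
  · -- maps M into M
    rintro ⟨h, g⟩ ⟨hl, hu⟩
    simp only [le2, Mem, rM] at *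
    have h1 : 1 ≤ h := by rcases hl with h' | ⟨h', _⟩ <;> linarith
    obtain ⟨es, hs1⟩ := sfacts h1
    have hs0 : 0 < Real.sqrt (2*h) := by linarith
    constructor
    · left; exact hs1
    · rcases hu with h' | ⟨h', hg⟩
      · left; nlinarith
      · right
        have : Real.sqrt (2*h) = 2 := by nlinarith
        refine ⟨this, ?_⟩
        rw [this]
        have : 2 / (2+2 : ℝ) * g = g/2 := by ring
        rw [this]
        linarith
  · -- Sq1
    rintro ⟨h, g⟩ ⟨hl, hu⟩
    simp only [le2] at hl hu
    have h1 : 1 ≤ h := by rcases hl with h' | ⟨h', _⟩ <;> linarith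
    obtain ⟨es, hs1⟩ := sfacts h1
    set s := Real.sqrt (2*h) with hsdef
    have hs2 : (0:ℝ) < s + 2 := by linarith
    simp only [mulM, rM, sup2]
    have e : (s * s / 2, s / 2 * (2 / (s + 2) * g) + 2 / (s + 2) * g) = ((h : ℝ), g) := by
      have e2 : s / 2 * (2 / (s + 2) * g) + 2 / (s + 2) * g = g := by
        field_simp
      rw [e2]; rw [es]; norm_num
    simp only [← hsdef, e]
    split_ifs with hc
    · simp only [le2] at hc
      rcases hc with h' | ⟨h', hg⟩
      · exfalso; linarith
      · rcases hl with h'' | ⟨_, hg'⟩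
        · exfalso; linarith
        · have : g = 0 := le_antisymm hg hg'
          simp [h', this]
    · rfl
  · -- Sq2
    rintro ⟨h, g⟩ ⟨k, m⟩ ⟨hl, hu⟩ ⟨ql, qu⟩ hle
    simp only [le2] at hl hu ql qu
    have h1 : 1 ≤ h := by rcases hl with h' | ⟨h', _⟩ <;> linarith
    have k1 : 1 ≤ k := by rcases ql with h' | ⟨h', _⟩ <;> linarith
    obtain ⟨es, hs1⟩ := sfacts h1
    set s := Real.sqrt (2*h) with hsdef
    have hs2 : (0:ℝ) < s + 2 := by linarith
    simp only [mulM, sup2, rM, le2] at hle ⊢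
    split_ifs at hle with hc
    · -- q ⊙ q = (1,0)
      rcases hc with h' | ⟨h', hm⟩
      · left; nlinarith
      · -- k*k = 2, m ≤ 0
        have hm0 : m ≤ 0 := by nlinarith
        by_cases hh : 1 < h
        · left; nlinarith
        · have hh1 : h = 1 := le_antisymm (not_lt.mp hh) h1
          have hg0 : 0 ≤ g := by
            rcases hl with h'' | ⟨_, hg'⟩
            · exfalso; linarith
            · exact hg'
          right
          have hks : k = s := by nlinarith
          refine ⟨hks, ?_⟩
          have : 0 ≤ 2 / (s + 2) * g := by positivity
          linarith
    · erw [if_neg hc] at hle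
      rcases hle with h' | ⟨h', hm⟩
      · left; nlinarith
      · right
        have hks : k = s := by nlinarith
        refine ⟨hks, ?_⟩
        rw [show 2 / (s + 2) * g = 2 * g / (s+2) by ring, le_div_iff₀ hs2]
        rw [hks] at hm
        nlinarith [hm]
  · -- strict
    simp only [rM, lnegM]
    norm_num
  · -- Sq3 fails
    intro hco
    have hmem : Mem (1, 1) := by
      simp only [Mem, le2]
      constructor
      · right; norm_num
      · left; norm_num
    have := (hco (1, 1) hmem).1
    simp only [lnegM, rM, oplusM, inf2] at this
    norm_num at this
    rw [if_pos] at this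
    · have h4 : Real.sqrt 4 = 2 := by
        rw [show (4:ℝ) = 2^2 by norm_num, Real.sqrt_sq (by norm_num : (0:ℝ) ≤ 2)]
      have h2 := congrArg Prod.snd this
      simp only [neg_inj] at h2
      have hs2 : Real.sqrt 2 * Real.sqrt 2 = 2 := Real.mul_self_sqrt (by norm_num)
      have hpos : 0 < Real.sqrt 2 + 2 := by positivity
      have h2' : (2:ℝ) * (Real.sqrt 2 + 2) = 2 * (2 + 2) := by
        rw [div_eq_div_iff (by norm_num) (ne_of_gt hpos)] at h2
        linarith [h2]
      nlinarith [Real.sqrt_nonneg 2]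
    · simp only [le2]
      right
      norm_num
      positivity


end Stmt19
end
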